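/- Let n₁ ≤ n₂ be positive integers and ε ∈ (0,1], and let c_{ε/2} = (exp(ε/2)+1)/(exp(ε/2)−1). Let {Z'_{i,j} : i ∈ [n₁]} and {W'_{i',j} : i' ∈ [n₂]} be {0,1}-valued random variables such that, for the fixed coordinate j, the variables Z'_{1,j},…,Z'_{n₁,j}, W'_{1,j},…,W'_{n₂,j} are mutually independent, and set p̂_{X,j} = (c_{ε/2}/n₁) Σ_{i=1}^{n₁} (Z'_{i,j} − 1/(exp(ε/2)+1)) and p̂_{Y,j} = (c_{ε/2}/n₂) Σ_{i'=1}^{n₂} (W'_{i',j} − 1/(exp(ε/2)+1)). Then the difference δ̂_j = p̂_{X,j} − p̂_{Y,j} is SG(10/(n₁ε²)). -/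

import Mathlib

open MeasureTheory ProbabilityTheory
open Real

noncomputable section

/-- `X` is sub-Gaussian with variance proxy `σ²`, written SG(σ²). -/
def IsSubGaussian {Ω : Type*} [MeasurableSpace Ω] (P : Measure Ω) (X : Ω → ℝ) (σ2 : ℝ) : Prop :=
  ∀ l : ℝ, ∫ ω, Real.exp (l * (X ω - ∫ ω', X ω' ∂P)) ∂P ≤ Real.exp (l ^ 2 * σ2 / 2)

/-- Hoeffding's lemma, scalar form for Bernoulli mgf. -/
theorem hoeffding_scalar {p : ℝ} (hp0 : 0 ≤ p) (hp1 : p ≤ 1) (t : ℝ) :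
    Real.exp (-(t * p)) * (1 - p + p * Real.exp t) ≤ Real.exp (t ^ 2 / 8) := by
  have hD : ∀ s : ℝ, 0 < 1 - p + p * Real.exp s := by
    intro s
    rcases eq_or_lt_of_le hp1 with h | h
    · have := exp_pos s; nlinarith
    · have := (exp_pos s).le; nlinarith
  set h : ℝ → ℝ := fun s => s ^ 2 / 8 + s * p - Real.log (1 - p + p * Real.exp s) with hh
  set h' : ℝ → ℝ := fun s => s / 4 + p - p * Real.exp s / (1 - p + p * Real.exp s) with hh'
  have hder : ∀ s, HasDerivAt h (h' s) s := by
    intro s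
    have h1 : HasDerivAt (fun s : ℝ => 1 - p + p * Real.exp s) (p * Real.exp s) s :=
      ((Real.hasDerivAt_exp s).const_mul p).const_add (1 - p)
    have h2 : HasDerivAt (fun s : ℝ => Real.log (1 - p + p * Real.exp s))
        (p * Real.exp s / (1 - p + p * Real.exp s)) s := h1.log (hD s).ne'
    have h3 : HasDerivAt (fun s : ℝ => s ^ 2 / 8 + s * p) (s / 4 + p) s := by
      have := ((hasDerivAt_pow 2 s).div_const 8).add ((hasDerivAt_id s).mul_const p)
      exact this.congr_deriv (by norm_num; ring)
    exact h3.sub h2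
  have hder' : ∀ s, HasDerivAt h'
      (1 / 4 - p * (1 - p) * Real.exp s / (1 - p + p * Real.exp s) ^ 2) s := by
    intro s
    have h1 : HasDerivAt (fun s : ℝ => p * Real.exp s) (p * Real.exp s) s :=
      (Real.hasDerivAt_exp s).const_mul p
    have h2 : HasDerivAt (fun s : ℝ => 1 - p + p * Real.exp s) (p * Real.exp s) s :=
      ((Real.hasDerivAt_exp s).const_mul p).const_add (1 - p)
    have h3 := h1.div h2 (hD s).ne'
    have h4 : HasDerivAt (fun s : ℝ => s / 4 + p) (1 / 4) s := by
      simpa using (hasDerivAt_id s).div_const 4 |>.add_const p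
    have h5 := h4.sub h3
    exact h5.congr_deriv (by ring)
  have hmono : Monotone h' := by
    have hd : ∀ s, 0 ≤ 1 / 4 - p * (1 - p) * Real.exp s / (1 - p + p * Real.exp s) ^ 2 := by
      intro s
      rw [sub_nonneg, div_le_iff₀ (pow_pos (hD s) 2)]
      nlinarith [sq_nonneg ((1 - p) - p * Real.exp s), exp_pos s]
    have : ∀ s, 0 ≤ deriv h' s := fun s => (hder' s).deriv ▸ hd s
    exact monotone_of_deriv_nonneg (fun s => (hder' s).differentiableAt) this
  have h'0 : h' 0 = 0 := by simp [hh']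
  have hnonneg : ∀ s, 0 ≤ h s := by
    have h0 : h 0 = 0 := by simp [hh]
    intro s
    rcases le_or_gt 0 s with hs | hs
    · have : MonotoneOn h (Set.Ici 0) := by
        refine monotoneOn_of_deriv_nonneg (convex_Ici 0)
          (fun x _ => ((hder x).differentiableAt).continuousAt.continuousWithinAt)
          (fun x _ => ((hder x).differentiableAt).differentiableWithinAt)
          (fun x hx => ?_)
        rw [(hder x).deriv]
        rw [interior_Ici] at hx
        have := hmono (le_of_lt hx)
        simpa [h'0] using this
      have := this (Set.self_mem_Ici) (Set.mem_Ici.2 hs) hs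
      simpa [h0] using this
    · have : AntitoneOn h (Set.Iic 0) := by
        refine antitoneOn_of_deriv_nonpos (convex_Iic 0)
          (fun x _ => ((hder x).differentiableAt).continuousAt.continuousWithinAt)
          (fun x _ => ((hder x).differentiableAt).differentiableWithinAt)
          (fun x hx => ?_)
        rw [(hder x).deriv]
        rw [interior_Iic] at hx
        have := hmono (le_of_lt hx)
        simpa [h'0] using this
      have := this (Set.mem_Iic.2 hs.le) (Set.self_mem_Iic) hs.le
      simpa [h0] using this
  have := hnonneg t
  have hlog : Real.log (1 - p + p * Real.exp t) ≤ t ^ 2 / 8 + t * p := by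
    simp only [hh] at this; linarith
  have := (Real.log_le_iff_le_exp (hD t)).1 hlog
  calc Real.exp (-(t * p)) * (1 - p + p * Real.exp t)
      ≤ Real.exp (-(t * p)) * Real.exp (t ^ 2 / 8 + t * p) := by
        exact mul_le_mul_of_nonneg_left this (exp_pos _).le
    _ = Real.exp (t ^ 2 / 8) := by rw [← Real.exp_add]; ring_nf

/-- mgf bound for a centered `{0,1}`-valued random variable. -/
theorem bernoulli_mgf {Ω : Type*} [MeasurableSpace Ω] (P : Measure Ω) [IsProbabilityMeasure P]
    {Z : Ω → ℝ} (hm : Measurable Z) (h01 : ∀ ω, Z ω = 0 ∨ Z ω = 1) (t : ℝ) :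
    ∫ ω, Real.exp (t * (Z ω - ∫ ω', Z ω' ∂P)) ∂P ≤ Real.exp (t ^ 2 / 8) := by
  have hZint : Integrable Z P := by
    refine ⟨hm.aestronglyMeasurable, ?_⟩
    refine HasFiniteIntegral.of_bounded (C := 1) (Filter.Eventually.of_forall fun ω => ?_)
    rcases h01 ω with h | h <;> simp [h]
  set p := ∫ ω', Z ω' ∂P with hp
  have hp0 : 0 ≤ p := integral_nonneg fun ω => by rcases h01 ω with h | h <;> simp [h]
  have hp1 : p ≤ 1 := by
    calc p ≤ ∫ _, (1 : ℝ) ∂P := by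
            refine integral_mono hZint (integrable_const 1) fun ω => ?_
            rcases h01 ω with h | h <;> simp [h]
      _ = 1 := by simp
  have hpt : ∀ ω, Real.exp (t * (Z ω - p)) =
      Real.exp (-(t * p)) * (1 + (Real.exp t - 1) * Z ω) := by
    intro ω
    rcases h01 ω with h | h <;> simp [h, ← Real.exp_add] <;> ring_nf
  calc ∫ ω, Real.exp (t * (Z ω - p)) ∂P
      = ∫ ω, Real.exp (-(t * p)) * (1 + (Real.exp t - 1) * Z ω) ∂P := by
        exact integral_congr_ae (Filter.Eventually.of_forall hpt)
    _ = Real.exp (-(t * p)) * (1 - p + p * Real.exp t) := by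
        rw [integral_const_mul, integral_add (integrable_const 1) (hZint.const_mul _),
          integral_const_mul, integral_const]
        simp only [probReal_univ, measure_univ, ENNReal.toReal_one, smul_eq_mul, one_mul]
        rw [← hp]
        ring_nf
    _ ≤ Real.exp (t ^ 2 / 8) := hoeffding_scalar hp0 hp1 t

/-- mgf bound for a weighted sum of independent `{0,1}`-valued random variables. -/
theorem sum_mgf {Ω κ : Type*} [MeasurableSpace Ω] [Fintype κ] (P : Measure Ω)
    [IsProbabilityMeasure P] (f : κ → Ω → ℝ) (hm : ∀ k, Measurable (f k))
    (h01 : ∀ k ω, f k ω = 0 ∨ f k ω = 1)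
    (hindep : iIndepFun f P) (a : κ → ℝ) (l : ℝ) :
    ∫ ω, Real.exp (l * ∑ k, a k * (f k ω - ∫ ω', f k ω' ∂P)) ∂P ≤
      Real.exp (l ^ 2 * (∑ k, (a k) ^ 2) / 8) := by
  classical
  set X : κ → Ω → ℝ := fun k ω => a k * (f k ω - ∫ ω', f k ω' ∂P) with hX
  have hXm : ∀ k, Measurable (X k) := fun k => ((hm k).sub_const _).const_mul _
  have hXindep : iIndepFun X P := by
    have := hindep.comp (fun k (y : ℝ) => a k * (y - ∫ ω', f k ω' ∂P))
      (fun k => (measurable_id.sub_const _).const_mul _)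
    exact this
  have hsum : ∀ ω, (∑ k, a k * (f k ω - ∫ ω', f k ω' ∂P)) = (∑ k, X k) ω := by
    intro ω; simp [hX, Finset.sum_apply]
  calc ∫ ω, Real.exp (l * ∑ k, a k * (f k ω - ∫ ω', f k ω' ∂P)) ∂P
      = mgf (∑ k, X k) P l := by
        unfold mgf
        refine integral_congr_ae (Filter.Eventually.of_forall fun ω => ?_)
        simp only [← hsum ω]
    _ = ∏ k, mgf (X k) P l := hXindep.mgf_sum hXm Finset.univ
    _ ≤ ∏ k, Real.exp ((l * a k) ^ 2 / 8) := by
        refine Finset.prod_le_prod (fun k _ => mgf_nonneg) (fun k _ => ?_)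
        have := bernoulli_mgf P (hm k) (h01 k) (l * a k)
        unfold mgf
        calc ∫ ω, Real.exp (l * X k ω) ∂P
            = ∫ ω, Real.exp ((l * a k) * (f k ω - ∫ ω', f k ω' ∂P)) ∂P := by
              refine integral_congr_ae (Filter.Eventually.of_forall fun ω => ?_)
              simp [hX]; ring_nf
          _ ≤ Real.exp ((l * a k) ^ 2 / 8) := this
    _ = Real.exp (l ^ 2 * (∑ k, (a k) ^ 2) / 8) := by
        rw [← Real.exp_sum]
        congr 1
        rw [Finset.mul_sum, ← Finset.sum_div]
        congr 1
        exact Finset.sum_congr rfl fun k _ => by ring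


/-- the difference `δ̂_j = p̂_{X,j} − p̂_{Y,j}` of rescaled sums of independent
`{0,1}`-valued random variables is SG(10/(n₁ε²)). -/
theorem stmt_14 (Ω : Type) (_ : MeasurableSpace Ω) (P : Measure Ω) [IsProbabilityMeasure P]
    (n₁ n₂ : ℕ) (hn₁ : 0 < n₁) (hn₁₂ : n₁ ≤ n₂) (ε : ℝ) (hε0 : 0 < ε) (hε1 : ε ≤ 1)
    (Z' : Fin n₁ → Ω → ℝ) (W' : Fin n₂ → Ω → ℝ)
    (hmZ : ∀ i, Measurable (Z' i)) (hmW : ∀ i', Measurable (W' i'))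
    (hZ01 : ∀ i ω, Z' i ω = 0 ∨ Z' i ω = 1) (hW01 : ∀ i' ω, W' i' ω = 0 ∨ W' i' ω = 1)
    (hindep : iIndepFun (Sum.elim Z' W') P) :
    IsSubGaussian P
      (fun ω =>
        ((Real.exp (ε / 2) + 1) / (Real.exp (ε / 2) - 1) / n₁) *
            ∑ i, (Z' i ω - 1 / (Real.exp (ε / 2) + 1)) -
          ((Real.exp (ε / 2) + 1) / (Real.exp (ε / 2) - 1) / n₂) *
            ∑ i', (W' i' ω - 1 / (Real.exp (ε / 2) + 1)))
      (10 / (n₁ * ε ^ 2)) := by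
  have hn₁R : (0 : ℝ) < n₁ := by exact_mod_cast hn₁
  have hn₂R : (0 : ℝ) < n₂ := lt_of_lt_of_le hn₁R (by exact_mod_cast hn₁₂)
  have hn₁₂R : (n₁ : ℝ) ≤ n₂ := by exact_mod_cast hn₁₂
  set E := Real.exp (ε / 2) with hE
  have hE1 : 1 < E := Real.one_lt_exp_iff.2 (by linarith)
  set c := (E + 1) / (E - 1) with hc
  have hcpos : 0 < c := div_pos (by linarith) (by linarith)
  set q := 1 / (E + 1) with hq
  set f : Fin n₁ ⊕ Fin n₂ → Ω → ℝ := Sum.elim Z' W' with hf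
  set a : Fin n₁ ⊕ Fin n₂ → ℝ := Sum.elim (fun _ => c / n₁) (fun _ => -(c / n₂)) with ha
  have hfm : ∀ k, Measurable (f k) := by rintro (i | i); exacts [hmZ i, hmW i]
  have hf01 : ∀ k ω, f k ω = 0 ∨ f k ω = 1 := by
    rintro (i | i) ω; exacts [hZ01 i ω, hW01 i ω]
  have hint : ∀ k, Integrable (f k) P := by
    intro k
    refine ⟨(hfm k).aestronglyMeasurable, ?_⟩
    refine HasFiniteIntegral.of_bounded (C := 1) (Filter.Eventually.of_forall fun ω => ?_)
    rcases hf01 k ω with h | h <;> simp [h]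
  -- rewrite the statement's function as a single sum
  have hGeq : (fun ω =>
        (c / n₁) * ∑ i, (Z' i ω - q) - (c / n₂) * ∑ i', (W' i' ω - q)) =
      fun ω => ∑ k, a k * (f k ω - q) := by
    funext ω
    rw [Fintype.sum_sum_type]
    simp only [ha, hf, Sum.elim_inl, Sum.elim_inr, neg_mul]
    rw [Finset.mul_sum, Finset.mul_sum, Finset.sum_neg_distrib, sub_eq_add_neg]
  rw [hGeq]
  intro l
  show (∫ ω, Real.exp (l * ((∑ k, a k * (f k ω - q)) -
      ∫ ω', (∑ k, a k * (f k ω' - q)) ∂P)) ∂P) ≤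
    Real.exp (l ^ 2 * (10 / (n₁ * ε ^ 2)) / 2)
  -- mean of the sum
  have hmean : (∫ ω', (∑ k, a k * (f k ω' - q)) ∂P) =
      ∑ k, a k * ((∫ ω', f k ω' ∂P) - q) := by
    rw [integral_finset_sum (f := fun k ω' => a k * (f k ω' - q)) Finset.univ
      (fun k _ => by exact ((hint k).sub (integrable_const q)).const_mul (a k))]
    refine Finset.sum_congr rfl fun k _ => ?_
    rw [integral_const_mul, integral_sub (hint k) (integrable_const q), integral_const]
    simp
  have hcentered : ∀ ω, (∑ k, a k * (f k ω - q)) - ∑ k, a k * ((∫ ω', f k ω' ∂P) - q) =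
      ∑ k, a k * (f k ω - ∫ ω', f k ω' ∂P) := by
    intro ω
    rw [← Finset.sum_sub_distrib]
    exact Finset.sum_congr rfl fun k _ => by ring
  have hsumsq : (∑ k, (a k) ^ 2) = c ^ 2 / n₁ + c ^ 2 / n₂ := by
    rw [Fintype.sum_sum_type]
    simp only [ha, Sum.elim_inl, Sum.elim_inr, neg_sq, Finset.sum_const, Finset.card_univ,
      Fintype.card_fin, nsmul_eq_mul, div_pow]
    field_simp
  rw [hmean]
  calc ∫ ω, Real.exp (l * ((∑ k, a k * (f k ω - q)) -
          ∑ k, a k * ((∫ ω', f k ω' ∂P) - q))) ∂P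
      = ∫ ω, Real.exp (l * ∑ k, a k * (f k ω - ∫ ω', f k ω' ∂P)) ∂P := by
        exact integral_congr_ae (Filter.Eventually.of_forall fun ω => by
          simp only [hcentered ω])
    _ ≤ Real.exp (l ^ 2 * (∑ k, (a k) ^ 2) / 8) := sum_mgf P f hfm hf01 hindep a l
    _ ≤ Real.exp (l ^ 2 * (10 / (n₁ * ε ^ 2)) / 2) := by
        apply Real.exp_le_exp.2
        rw [hsumsq]
        have hEq : 1 + ε / 2 + (ε / 2) ^ 2 / 2 ≤ E :=
          hE ▸ Real.quadratic_le_exp_of_nonneg (by linarith)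
        have hcε : c * ε ≤ 21 / 5 := by
          rw [hc, div_mul_eq_mul_div, div_le_div_iff₀ (by linarith) (by norm_num)]
          nlinarith [hEq, hε0.le, hε1,
            mul_nonneg (mul_nonneg hε0.le (sub_nonneg.2 hε1)) (by linarith : (0:ℝ) ≤ 5 * ε + 4),
            (by linarith : (0:ℝ) ≤ 21 - 5 * ε)]
        have hkey : c ^ 2 ≤ 20 / ε ^ 2 := by
          rw [le_div_iff₀ (by positivity)]
          nlinarith [hcε, mul_pos hcpos hε0, mul_self_nonneg (21 / 5 - c * ε)]
        have h1 : c ^ 2 / (n₂ : ℝ) ≤ c ^ 2 / n₁ :=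
          div_le_div_of_nonneg_left (sq_nonneg c) hn₁R hn₁₂R
        have h2 : c ^ 2 / (n₁ : ℝ) ≤ 2 * (10 / (n₁ * ε ^ 2)) := by
          have h3 : (2 : ℝ) * (10 / (n₁ * ε ^ 2)) = (20 / ε ^ 2) / n₁ := by
            field_simp
            ring
          rw [h3]
          gcongr
        have h4 : c ^ 2 / (n₁ : ℝ) + c ^ 2 / n₂ ≤ 4 * (10 / (n₁ * ε ^ 2)) := by linarith
        nlinarith [mul_le_mul_of_nonneg_left h4 (sq_nonneg l)]
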